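/- arXiv:2010.07452 — 2 statements merged into one kernel-verified Lean document; each statement's English description precedes it below -/
import Mathlib

section
/- Let q > 0, σ_q > 0, and let g : ℝ → [−q, q] be measurable. Define the two-output channel Q̂ from ℝ to {−q, q} by Q̂(q|x) = P( N(g(x), σ_q²) > 0 ) and Q̂(−q|x) = P( N(g(x), σ_q²) ≤ 0 ), where N(m,σ²) denotes a Gaussian random variable with mean m and variance σ². Then the Dobrushin coefficient satisfies δ(Q̂) ≥ 2 P( N(q, σ_q²) ≤ 0 ); moreover, if there exist x, x' ∈ ℝ with g(x) = q and g(x') = −q, then δ(Q̂) = 2 P( N(q, σ_q²) ≤ 0 ). -/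
open MeasureTheory ProbabilityTheory
open scoped NNReal

noncomputable section

/-- Dobrushin coefficient of an observation channel `Q` into a finite set:
`δ(Q) = inf_{x,x'} Σ_y min (Q(y|x)) (Q(y|x'))`. -/
def dobrushinObs {X Y : Type*} [Fintype Y] (Q : X → Y → ℝ) : ℝ :=
  ⨅ p : X × X, ∑ y : Y, min (Q p.1 y) (Q p.2 y)

end

private lemma gr_Iic (m : ℝ) (v : ℝ≥0) :
    gaussianReal m v (Set.Iic 0) = gaussianReal 0 v (Set.Iic (-m)) := by
  have h := gaussianReal_map_add_const (μ := 0) (v := v) m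
  rw [zero_add] at h
  rw [← h, Measure.map_apply (measurable_id'.add_const m) measurableSet_Iic]
  congr 1
  ext x
  simp only [Set.mem_preimage, Set.mem_Iic]
  constructor <;> intro h <;> linarith

private lemma gr_anti {m m' : ℝ} (h : m ≤ m') (v : ℝ≥0) :
    (gaussianReal m' v (Set.Iic 0)).toReal ≤ (gaussianReal m v (Set.Iic 0)).toReal := by
  rw [gr_Iic, gr_Iic]
  refine ENNReal.toReal_mono (measure_ne_top _ _) (measure_mono ?_)
  exact Set.Iic_subset_Iic.2 (by linarith)

private lemma gr_symm (q : ℝ) (v : ℝ≥0) (hv : v ≠ 0) :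
    gaussianReal (-q) v (Set.Ioi 0) = gaussianReal q v (Set.Iic 0) := by
  have h := gaussianReal_map_const_mul (μ := q) (v := v) (-1)
  have hv' : (NNReal.mk ((-1:ℝ)^2) (sq_nonneg _) * v : ℝ≥0) = v := by
    ext; simp
  rw [hv', neg_one_mul] at h
  rw [← h, Measure.map_apply (measurable_id'.const_mul _) measurableSet_Ioi]
  have : ((-1 : ℝ) * ·) ⁻¹' Set.Ioi 0 = Set.Iio 0 := by
    ext x; simp
  rw [this]
  have h0 : gaussianReal q v {(0:ℝ)} = 0 :=
    gaussianReal_absolutelyContinuous q hv (measure_singleton 0)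
  have : Set.Iic (0:ℝ) = Set.Iio 0 ∪ {0} := by
    ext x; simp [le_iff_lt_or_eq]
  rw [this]
  exact le_antisymm (measure_mono Set.subset_union_left)
    ((measure_union_le _ _).trans (by simp [h0]))

private lemma gr_tot (m : ℝ) (v : ℝ≥0) :
    (gaussianReal m v (Set.Ioi 0)).toReal + (gaussianReal m v (Set.Iic 0)).toReal = 1 := by
  rw [← ENNReal.toReal_add (measure_ne_top _ _) (measure_ne_top _ _)]
  have : Set.Ioi (0:ℝ) = (Set.Iic 0)ᶜ := (Set.compl_Iic).symm
  rw [this, add_comm, measure_add_measure_compl measurableSet_Iic]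
  simp

theorem statement17 (q : ℝ) (hq : 0 < q) (σq : ℝ≥0) (hσq : 0 < σq)
    (g : ℝ → ℝ) (hg_meas : Measurable g)
    (hg_range : ∀ x : ℝ, g x ∈ Set.Icc (-q) q)
    (Qhat : ℝ → Bool → ℝ)
    (hQ_pos : ∀ x : ℝ,
      Qhat x true = ((gaussianReal (g x) (σq ^ 2)) (Set.Ioi (0 : ℝ))).toReal)
    (hQ_neg : ∀ x : ℝ,
      Qhat x false = ((gaussianReal (g x) (σq ^ 2)) (Set.Iic (0 : ℝ))).toReal) :
    2 * ((gaussianReal q (σq ^ 2)) (Set.Iic (0 : ℝ))).toReal ≤ dobrushinObs Qhat ∧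
      ((∃ x x' : ℝ, g x = q ∧ g x' = -q) →
        dobrushinObs Qhat = 2 * ((gaussianReal q (σq ^ 2)) (Set.Iic (0 : ℝ))).toReal) := by
  set v : ℝ≥0 := σq ^ 2 with hv_def
  have hv : v ≠ 0 := pow_ne_zero _ hσq.ne'
  set Fq : ℝ := ((gaussianReal q v) (Set.Iic (0 : ℝ))).toReal with hFq
  set Fnq : ℝ := ((gaussianReal (-q) v) (Set.Iic (0 : ℝ))).toReal with hFnq
  -- symmetry: 1 - Fnq = Fq
  have hsym : Fq + Fnq = 1 := by
    have := gr_tot (-q) v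
    rw [gr_symm q v hv] at this
    exact this
  have hle : Fq ≤ Fnq := gr_anti (by linarith) v
  -- each row sums to 1
  have hsum : ∀ x : ℝ, Qhat x true + Qhat x false = 1 := by
    intro x
    rw [hQ_pos, hQ_neg]
    exact gr_tot (g x) v
  -- bounds on Qhat x false
  have hb : ∀ x : ℝ, Fq ≤ Qhat x false ∧ Qhat x false ≤ Fnq := by
    intro x
    rw [hQ_neg]
    exact ⟨gr_anti (hg_range x).2 v, gr_anti (hg_range x).1 v⟩
  -- value of the sum
  have key : ∀ x x' : ℝ, (∑ y : Bool, min (Qhat x y) (Qhat x' y))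
      = 1 - |Qhat x false - Qhat x' false| := by
    intro x x'
    have h1 := hsum x
    have h2 := hsum x'
    rw [Fintype.sum_bool]
    rcases le_total (Qhat x false) (Qhat x' false) with h | h
    · rw [abs_of_nonpos (by linarith), min_eq_left h,
        min_eq_right (show Qhat x' true ≤ Qhat x true by linarith)]
      linarith
    · rw [abs_of_nonneg (by linarith), min_eq_right h,
        min_eq_left (show Qhat x true ≤ Qhat x' true by linarith)]
      linarith
  have hlb : ∀ p : ℝ × ℝ, 2 * Fq ≤ ∑ y : Bool, min (Qhat p.1 y) (Qhat p.2 y) := by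
    intro p
    rw [key]
    have h1 := hb p.1
    have h2 := hb p.2
    have : |Qhat p.1 false - Qhat p.2 false| ≤ Fnq - Fq := by
      rw [abs_sub_le_iff]; constructor <;> linarith
    linarith
  have hbdd : BddBelow (Set.range fun p : ℝ × ℝ => ∑ y : Bool, min (Qhat p.1 y) (Qhat p.2 y)) :=
    ⟨2 * Fq, Set.forall_mem_range.mpr hlb⟩
  constructor
  · exact le_ciInf hlb
  · rintro ⟨x, x', hx, hx'⟩
    refine le_antisymm ?_ (le_ciInf hlb)
    have := ciInf_le hbdd (x, x')
    refine this.trans_eq ?_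
    rw [key]
    have hu : Qhat x false = Fq := by rw [hQ_neg, hx]
    have hu' : Qhat x' false = Fnq := by rw [hQ_neg, hx']
    rw [hu, hu', abs_of_nonpos (by linarith)]
    linarith
end

section
/- Let t > 0, σ_t > 0, let U be a set, and let f : ℝ × U → [−t, t] be measurable. Define the transition kernel T from ℝ×U to ℝ by T(·|x,u) = N(f(x,u), σ_t²), the Gaussian measure with mean f(x,u) and variance σ_t². Then for every u ∈ U the Dobrushin coefficient satisfies δ(T(·|·,u)) ≥ 2 P( N(t, σ_t²) ≤ 0 ), and hence δ̃(T) = inf_{u∈U} δ(T(·|·,u)) ≥ 2 P( N(t, σ_t²) ≤ 0 ). -/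
open MeasureTheory ProbabilityTheory
open scoped NNReal ENNReal



noncomputable section

/-- Dobrushin coefficient of a Markov kernel `K`, via finite measurable partitions. -/
def dobrushinKernel {X : Type*} [MeasurableSpace X] (K : X → Measure X) : ℝ :=
  sInf {r | ∃ (x x' : X) (n : ℕ) (A : Fin n → Set X),
    (∀ i, MeasurableSet (A i)) ∧ Pairwise (Function.onFun Disjoint A) ∧
    (⋃ i, A i) = Set.univ ∧
    r = ∑ i, min ((K x (A i)).toReal) ((K x' (A i)).toReal)}

/-- `δ̃(T) = inf_u δ(T(·|·,u))`. -/
def dobrushinTrans {X U : Type*} [MeasurableSpace X] (T : X → U → Measure X) : ℝ :=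
  ⨅ u : U, dobrushinKernel fun x => T x u

end



lemma pdf_bound' {a m : ℝ} {v : ℝ≥0} {y : ℝ} (h : (y - m)^2 ≤ (y - a)^2) :
    gaussianPDF a v y ≤ gaussianPDF m v y := by
  unfold gaussianPDF gaussianPDFReal
  apply ENNReal.ofReal_le_ofReal
  apply mul_le_mul_of_nonneg_left _ (by positivity)
  apply Real.exp_le_exp.2
  rcases eq_or_lt_of_le v.2 with hv | hv
  · rw [show ((v:ℝ)) = 0 from hv.symm]; norm_num
  · gcongr

lemma key_minor {t : ℝ} {v : ℝ≥0} (hv : v ≠ 0) {m : ℝ} (hm : m ∈ Set.Icc (-t) t)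
    {A : Set ℝ} (hA : MeasurableSet A) :
    gaussianReal t v (A ∩ Set.Iic 0) + gaussianReal (-t) v (A ∩ Set.Ioi 0)
      ≤ gaussianReal m v A := by
  have hm1 := hm.1
  have hm2 := hm.2
  have h1 : gaussianReal t v (A ∩ Set.Iic 0) ≤ gaussianReal m v (A ∩ Set.Iic 0) := by
    rw [gaussianReal_apply _ hv, gaussianReal_apply _ hv]
    apply setLIntegral_mono_ae' (hA.inter measurableSet_Iic)
    filter_upwards with y hy
    have hy0 : y ≤ 0 := hy.2
    have key : (0:ℝ) ≤ (t - m) * (m + t - 2*y) :=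
      mul_nonneg (by linarith) (by linarith)
    exact pdf_bound' (by nlinarith [key])
  have h2 : gaussianReal (-t) v (A ∩ Set.Ioi 0) ≤ gaussianReal m v (A ∩ Set.Ioi 0) := by
    rw [gaussianReal_apply _ hv, gaussianReal_apply _ hv]
    apply setLIntegral_mono_ae' (hA.inter measurableSet_Ioi)
    filter_upwards with y hy
    have hy0 : (0:ℝ) < y := hy.2
    have key : (0:ℝ) ≤ (t + m) * (t - m + 2*y) :=
      mul_nonneg (by linarith) (by linarith)
    exact pdf_bound' (by nlinarith [key])
  have hsplit : gaussianReal m v (A ∩ Set.Iic 0) + gaussianReal m v (A ∩ Set.Ioi 0)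
      = gaussianReal m v A := by
    rw [← measure_union (Set.disjoint_left.2 (fun x hx hx' => not_lt.2 (Set.mem_Iic.1 hx.2) (Set.mem_Ioi.1 hx'.2)))
      (hA.inter measurableSet_Ioi)]
    congr 1
    rw [← Set.inter_union_distrib_left, Set.Iic_union_Ioi, Set.inter_univ]
  calc gaussianReal t v (A ∩ Set.Iic 0) + gaussianReal (-t) v (A ∩ Set.Ioi 0)
      ≤ gaussianReal m v (A ∩ Set.Iic 0) + gaussianReal m v (A ∩ Set.Ioi 0) :=
        add_le_add h1 h2
    _ = gaussianReal m v A := hsplit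

lemma gauss_symm {t : ℝ} {v : ℝ≥0} (hv : v ≠ 0) :
    gaussianReal (-t) v (Set.Ioi 0) = gaussianReal t v (Set.Iic 0) := by
  have hmap : (gaussianReal (-t) v).map (fun x => (-1 : ℝ) * x) = gaussianReal t v := by
    rw [gaussianReal_map_const_mul]
    norm_num
  have h : gaussianReal t v (Set.Iic 0)
      = gaussianReal (-t) v ((fun x => (-1:ℝ) * x) ⁻¹' Set.Iic 0) := by
    rw [← hmap, Measure.map_apply (by fun_prop) measurableSet_Iic]
  have hpre : (fun x => (-1:ℝ) * x) ⁻¹' Set.Iic 0 = Set.Ici 0 := by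
    ext x; simp
  rw [h, hpre]
  apply le_antisymm
  · exact measure_mono Set.Ioi_subset_Ici_self
  · calc gaussianReal (-t) v (Set.Ici 0)
        ≤ gaussianReal (-t) v (Set.Ioi 0 ∪ {0}) := by
          apply measure_mono; intro x hx
          rcases eq_or_lt_of_le (Set.mem_Ici.1 hx) with h' | h'
          · exact Or.inr (by simp [← h'])
          · exact Or.inl h'
      _ ≤ gaussianReal (-t) v (Set.Ioi 0) + gaussianReal (-t) v {0} := measure_union_le _ _
      _ = gaussianReal (-t) v (Set.Ioi 0) := by
          rw [gaussianReal_absolutelyContinuous _ hv (measure_singleton 0), add_zero]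

theorem statement18 {U : Type*} [Nonempty U]
    (t : ℝ) (ht : 0 < t) (σt : ℝ≥0) (hσt : 0 < σt)
    (f : ℝ → U → ℝ)
    (hf_meas : ∀ u : U, Measurable fun x : ℝ => f x u)
    (hf_range : ∀ (x : ℝ) (u : U), f x u ∈ Set.Icc (-t) t)
    (T : ℝ → U → MeasureTheory.Measure ℝ)
    (hT : ∀ (x : ℝ) (u : U), T x u = gaussianReal (f x u) (σt ^ 2)) :
    (∀ u : U, 2 * ((gaussianReal t (σt ^ 2)) (Set.Iic (0 : ℝ))).toReal ≤
        dobrushinKernel fun x => T x u) ∧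
      2 * ((gaussianReal t (σt ^ 2)) (Set.Iic (0 : ℝ))).toReal ≤ dobrushinTrans T := by
  set v : ℝ≥0 := σt ^ 2 with hv_def
  have hv : v ≠ 0 := pow_ne_zero _ hσt.ne'
  set lam : Measure ℝ :=
    (gaussianReal t v).restrict (Set.Iic 0) + (gaussianReal (-t) v).restrict (Set.Ioi 0)
    with hlam
  have hlam_apply : ∀ {A : Set ℝ}, MeasurableSet A →
      lam A = gaussianReal t v (A ∩ Set.Iic 0) + gaussianReal (-t) v (A ∩ Set.Ioi 0) := by
    intro A hA
    rw [hlam]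
    simp [Measure.restrict_apply hA]
  have hlam_univ : lam Set.univ = 2 * gaussianReal t v (Set.Iic 0) := by
    rw [hlam_apply MeasurableSet.univ, Set.univ_inter, Set.univ_inter, gauss_symm hv, two_mul]
  have hle : ∀ (m : ℝ), m ∈ Set.Icc (-t) t → ∀ (A : Set ℝ), MeasurableSet A →
      lam A ≤ gaussianReal m v A := by
    intro m hm A hA
    rw [hlam_apply hA]
    exact key_minor hv hm hA
  have hmain : ∀ u : U, 2 * ((gaussianReal t v) (Set.Iic (0 : ℝ))).toReal ≤
      dobrushinKernel fun x => T x u := by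
    intro u
    apply le_csInf
    · exact ⟨_, 0, 0, 1, fun _ => Set.univ, fun _ => MeasurableSet.univ,
        fun i j hij => absurd (Subsingleton.elim i j) hij,
        Set.iUnion_const Set.univ, rfl⟩
    · rintro r ⟨x, x', n, A, hAmeas, hAdisj, hAuniv, rfl⟩
      have hsum : ∑ i, (lam (A i)).toReal
          ≤ ∑ i, min ((T x u (A i)).toReal) ((T x' u (A i)).toReal) := by
        apply Finset.sum_le_sum
        intro i _
        have hb1 : lam (A i) ≤ T x u (A i) := by
          rw [hT]; exact hle _ (hf_range x u) _ (hAmeas i)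
        have hb2 : lam (A i) ≤ T x' u (A i) := by
          rw [hT]; exact hle _ (hf_range x' u) _ (hAmeas i)
        have hfin : ∀ y : ℝ, T y u (A i) ≠ ⊤ := by
          intro y; rw [hT]
          exact (measure_ne_top _ _)
        exact le_min (ENNReal.toReal_mono (hfin x) hb1) (ENNReal.toReal_mono (hfin x') hb2)
      refine le_trans ?_ hsum
      have hlam_fin : lam Set.univ ≠ ⊤ := by
        rw [hlam_univ]
        exact ENNReal.mul_ne_top (by norm_num) (measure_ne_top _ _)
      have hfin' : ∀ i, lam (A i) ≠ ⊤ := fun i =>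
        ne_top_of_le_ne_top hlam_fin (measure_mono (Set.subset_univ _))
      have : ∑ i, (lam (A i)).toReal = (∑ i, lam (A i)).toReal := by
        rw [ENNReal.toReal_sum (fun i _ => hfin' i)]
      rw [this, ← tsum_fintype (L := SummationFilter.unconditional _), ← measure_iUnion hAdisj hAmeas, hAuniv, hlam_univ,
        ENNReal.toReal_mul]
      norm_num
  exact ⟨hmain, le_ciInf hmain⟩
end
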